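/- Let a, b : Fin K → ℝ with a_k, b_k > 0 and ∑_k a_k = ∑_k b_k = 1. Then ∑_k [ -a_k log(b_k/(a_k+b_k)) - b_k log(a_k/(a_k+b_k)) ] ≥ log 4, with equality iff a_k = b_k for all k. -/
import Mathlib


open Finset

lemma aux13 (a b : ℝ) (ha : 0 < a) (hb : 0 < b) :
    (a + b) * Real.log 2 ≤ -a * Real.log (b / (a + b)) - b * Real.log (a / (a + b)) ∧
    (a ≠ b → (a + b) * Real.log 2 < -a * Real.log (b / (a + b)) - b * Real.log (a / (a + b))) := by
  have hs : 0 < a + b := by linarith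
  rw [Real.log_div hb.ne' hs.ne', Real.log_div ha.ne' hs.ne']
  have h1 : 0 ≤ (a + b) * (2 * Real.log (a + b) - Real.log a - Real.log b - 2 * Real.log 2) := by
    apply mul_nonneg hs.le
    have hab : a * b ≤ (a + b) ^ 2 / 4 := by nlinarith [sq_nonneg (a - b)]
    have hlog : Real.log (a * b) ≤ Real.log ((a + b) ^ 2 / 4) :=
      Real.log_le_log (by positivity) hab
    rw [Real.log_mul ha.ne' hb.ne', Real.log_div (by positivity) (by norm_num),
      Real.log_pow] at hlog
    have h4 : Real.log 4 = 2 * Real.log 2 := by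
      rw [show (4 : ℝ) = 2 ^ 2 by norm_num, Real.log_pow]; push_cast; ring
    push_cast at hlog
    linarith
  have h2 : 0 ≤ (a - b) * (Real.log a - Real.log b) := by
    rcases le_total a b with h | h
    · have := Real.log_le_log ha h
      nlinarith
    · have := Real.log_le_log hb h
      apply mul_nonneg <;> linarith
  constructor
  · nlinarith [h1, h2]
  · intro hne
    have h2' : 0 < (a - b) * (Real.log a - Real.log b) := by
      rcases lt_or_gt_of_ne hne with h | h
      · have := Real.log_lt_log ha h
        apply mul_pos_of_neg_of_neg <;> linarith
      · have := Real.log_lt_log hb h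
        apply mul_pos <;> linarith
    nlinarith [h1, h2']

lemma aux13' (a b : ℝ) (ha : 0 < a) (hab : a = b) :
    -a * Real.log (b / (a + b)) - b * Real.log (a / (a + b)) = (a + b) * Real.log 2 := by
  subst hab
  have h12 : a / (a + a) = 2⁻¹ := by
    rw [← two_mul, div_eq_iff (by positivity : (2:ℝ)*a ≠ 0)]; ring
  rw [h12, Real.log_inv]; ring

/-- Lemma 2 for probability vectors on `Fin K`: the symmetrized confusion loss is
at least `log 4`, with equality iff the vectors coincide. -/
theorem stmt_13 (K : ℕ) (hK : 0 < K) (a b : Fin K → ℝ)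
    (ha : ∀ k, 0 < a k) (hb : ∀ k, 0 < b k)
    (has : ∑ k, a k = 1) (hbs : ∑ k, b k = 1) :
    Real.log 4 ≤
      (∑ k, (-a k * Real.log (b k / (a k + b k)) - b k * Real.log (a k / (a k + b k)))) ∧
    ((∑ k, (-a k * Real.log (b k / (a k + b k)) - b k * Real.log (a k / (a k + b k))))
        = Real.log 4 ↔ ∀ k, a k = b k) := by
  have hsumL : (∑ k, (a k + b k) * Real.log 2) = Real.log 4 := by
    rw [← Finset.sum_mul, Finset.sum_add_distrib, has, hbs,
      show (4 : ℝ) = 2 ^ 2 by norm_num, Real.log_pow]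
    push_cast; ring
  have hle : ∀ k ∈ Finset.univ, (a k + b k) * Real.log 2 ≤
      -a k * Real.log (b k / (a k + b k)) - b k * Real.log (a k / (a k + b k)) :=
    fun k _ => (aux13 (a k) (b k) (ha k) (hb k)).1
  have hineq : Real.log 4 ≤
      ∑ k, (-a k * Real.log (b k / (a k + b k)) - b k * Real.log (a k / (a k + b k))) := by
    rw [← hsumL]; exact Finset.sum_le_sum hle
  refine ⟨hineq, ⟨fun heq => ?_, fun hab => ?_⟩⟩
  · by_contra hne
    push_neg at hne
    obtain ⟨k0, hk0⟩ := hne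
    have hstrict : (∑ k, (a k + b k) * Real.log 2) <
        ∑ k, (-a k * Real.log (b k / (a k + b k)) - b k * Real.log (a k / (a k + b k))) :=
      Finset.sum_lt_sum hle ⟨k0, Finset.mem_univ k0,
        (aux13 (a k0) (b k0) (ha k0) (hb k0)).2 hk0⟩
    rw [hsumL, heq] at hstrict
    exact lt_irrefl _ hstrict
  · rw [← hsumL]
    exact Finset.sum_congr rfl fun k _ => aux13' (a k) (b k) (ha k) (hab k)
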